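/- Let Y be a finite nonempty set, f : Y → ℝ, ℓ : Y → ℝ, y₀ ∈ Y, and ε > 0. If y* ∈ Y maximizes f over Y, then ℓ(y*) ≤ ε·log(∑_{ŷ∈Y} exp((ℓ(ŷ) + f(ŷ))/ε)) − f(y₀); i.e., the extended log-loss upper bounds the true loss incurred by the maximizing prediction. -/

import Mathlib

/-- The extended log-loss upper bounds the true loss of the
maximizing prediction: if `y*` maximizes `f` and `ε > 0`, then
`ℓ(y*) ≤ ε·log(∑_{yhat} exp((ℓ(yhat)+f(yhat))/ε)) − f(y₀)`. -/
theorem extended_log_loss_upper_bounds_true_loss {Y : Type*} [Fintype Y] [Nonempty Y]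
    (f ℓ : Y → ℝ) (y₀ ystar : Y) (ε : ℝ) (hε : 0 < ε) (hstar : ∀ y, f y ≤ f ystar) :
    ℓ ystar ≤ ε * Real.log (∑ yhat, Real.exp ((ℓ yhat + f yhat) / ε)) - f y₀ := by
  have h1 : Real.exp ((ℓ ystar + f ystar) / ε) ≤ ∑ yhat, Real.exp ((ℓ yhat + f yhat) / ε) :=
    Finset.single_le_sum (f := fun y => Real.exp ((ℓ y + f y) / ε)) (fun y _ => (Real.exp_pos _).le) (Finset.mem_univ ystar)
  have h2 : (ℓ ystar + f ystar) / ε ≤ Real.log (∑ yhat, Real.exp ((ℓ yhat + f yhat) / ε)) := by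
    rw [← Real.log_exp ((ℓ ystar + f ystar) / ε)]
    exact Real.log_le_log (Real.exp_pos _) h1
  have h3 : ℓ ystar + f ystar ≤ ε * Real.log (∑ yhat, Real.exp ((ℓ yhat + f yhat) / ε)) := by
    rw [← div_le_iff₀' hε] at *
    linarith [h2]
  linarith [hstar y₀]
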